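/- Let (kₙ) be a sequence of distinct positive integers, X a complex Banach space, T a bounded operator on X, x ∈ X, and suppose for some real b > 1 the orbit {(bT)^{kₙ}x : n ∈ ℕ} is dense in X. Then for almost every θ ∈ ℝ (with respect to Lebesgue measure), the set {((bT)^{kₙ}x, e^{2πi kₙ θ}) : n ∈ ℕ} is dense in X × 𝕋. -/

import Mathlib

open MeasureTheory Complex Filter Finset Real

noncomputable def ee (t : ℝ) : ℂ := Complex.exp ((2 * Real.pi * t : ℝ) * Complex.I)

lemma ee_norm (t : ℝ) : ‖ee t‖ = 1 := Complex.norm_exp_ofReal_mul_I _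

lemma ee_add (s t : ℝ) : ee (s + t) = ee s * ee t := by
  rw [ee, ee, ee, ← Complex.exp_add]
  push_cast
  ring_nf

lemma ee_zero : ee 0 = 1 := by simp [ee]

lemma ee_conj (t : ℝ) : (starRingEnd ℂ) (ee t) = ee (-t) := by
  rw [ee, ee, ← Complex.exp_conj]
  congr 1
  simp only [map_mul, Complex.conj_I, Complex.conj_ofReal]
  push_cast
  ring

lemma ee_int (n : ℤ) : ee n = 1 := by
  rw [ee]
  convert Complex.exp_int_mul_two_pi_mul_I n using 2
  push_cast
  ring

lemma ee_nat_mul (a : ℕ) (t : ℝ) : ee (a * t) = ee t ^ a := by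
  rw [ee, ee, ← Complex.exp_nat_mul]
  congr 1
  push_cast
  ring

lemma ee_continuous : Continuous ee := by
  unfold ee
  fun_prop

lemma ee_integral (m : ℤ) (hm : m ≠ 0) : ∫ θ in (0:ℝ)..1, ee (m * θ) = 0 := by
  have hc : (2 * Real.pi * m : ℂ) * Complex.I ≠ 0 := by
    simp [Real.pi_ne_zero, Complex.I_ne_zero, hm]
  have : ∀ θ : ℝ, ee (m * θ) = Complex.exp (((2 * Real.pi * m : ℂ) * Complex.I) * θ) := by
    intro θ
    rw [ee]
    congr 1
    push_cast
    ring
  rw [intervalIntegral.integral_congr (fun θ _ => this θ), integral_exp_mul_complex hc]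
  have h1 : ((2 * Real.pi * m : ℂ) * Complex.I) * 1 = (m : ℂ) * (2 * Real.pi * Complex.I) := by ring
  have h0 : ((2 * Real.pi * m : ℂ) * Complex.I) * 0 = 0 := by ring
  push_cast
  rw [h1, h0, Complex.exp_int_mul_two_pi_mul_I, Complex.exp_zero, sub_self, zero_div]

lemma ee_circle (t : ℝ) : (Circle.exp (2 * Real.pi * t) : ℂ) = ee t := by
  rw [Circle.coe_exp, ee]

lemma ee_integral' (m : ℤ) :
    ∫ θ in Set.Ioc (0:ℝ) 1, ee (m * θ) = if m = 0 then 1 else 0 := by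
  rw [← intervalIntegral.integral_of_le (by norm_num : (0:ℝ) ≤ 1)]
  by_cases hm : m = 0
  · simp [hm, ee_zero]
  · simp only [hm, if_false]
    exact ee_integral m hm

lemma ee_cont' (m : ℝ) : Continuous fun θ : ℝ => ee (m * θ) :=
  ee_continuous.comp (continuous_const.mul continuous_id)

lemma WS_integral (f : ℕ → ℕ) (hf : Function.Injective f) (h : ℤ) (hh : h ≠ 0) (M : ℕ) :
    ∫ θ in Set.Ioc (0:ℝ) 1, ‖∑ j ∈ range M, ee (h * f j * θ)‖ ^ 2 = M := by
  have hint : ∀ (m : ℤ), IntegrableOn (fun θ : ℝ => ee ((m:ℝ) * θ)) (Set.Ioc 0 1) volume :=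
    fun m => (ee_cont' m).integrableOn_Ioc
  have hpt : ∀ θ : ℝ, (‖∑ j ∈ range M, ee (h * f j * θ)‖:ℝ) ^ 2
      = (∑ j ∈ range M, ∑ l ∈ range M, ee (((h * f j - h * f l : ℤ) : ℝ) * θ)).re := by
    intro θ
    have key : (∑ j ∈ range M, ee (h * f j * θ)) * (starRingEnd ℂ) (∑ l ∈ range M, ee (h * f l * θ))
        = ∑ j ∈ range M, ∑ l ∈ range M, ee (((h * f j - h * f l : ℤ) : ℝ) * θ) := by
      rw [map_sum, Finset.sum_mul_sum]
      refine Finset.sum_congr rfl fun j _ => Finset.sum_congr rfl fun l _ => ?_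
      rw [ee_conj, ← ee_add]
      congr 1
      push_cast
      ring
    rw [← key, Complex.mul_conj]
    simp [← Complex.sq_norm, ← Complex.ofReal_pow]
  simp only [hpt]
  have hre : (∫ θ in Set.Ioc (0:ℝ) 1,
      (∑ j ∈ range M, ∑ l ∈ range M, ee (((h * f j - h * f l : ℤ) : ℝ) * θ)).re)
      = (∫ θ in Set.Ioc (0:ℝ) 1,
      ∑ j ∈ range M, ∑ l ∈ range M, ee (((h * f j - h * f l : ℤ) : ℝ) * θ)).re :=
    _root_.integral_re (integrable_finset_sum _ fun j _ =>
      integrable_finset_sum _ fun l _ => hint _)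
  rw [hre]
  rw [MeasureTheory.integral_finset_sum _ fun j _ =>
    integrable_finset_sum _ fun l _ => hint _]
  have : ∀ j ∈ range M, (∫ θ in Set.Ioc (0:ℝ) 1,
      ∑ l ∈ range M, ee (((h * f j - h * f l : ℤ) : ℝ) * θ)) = 1 := by
    intro j hj
    rw [MeasureTheory.integral_finset_sum _ fun l _ => hint _]
    have : ∀ l ∈ range M, (∫ θ in Set.Ioc (0:ℝ) 1, ee (((h * f j - h * f l : ℤ) : ℝ) * θ))
        = if l = j then (1:ℂ) else 0 := by
      intro l _
      rw [ee_integral']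
      congr 1
      simp only [eq_iff_iff]
      constructor
      · intro he
        have : (f j : ℤ) = f l := by
          have := sub_eq_zero.mp he
          exact mul_left_cancel₀ hh this
        exact (hf (by exact_mod_cast this)).symm
      · rintro rfl; ring
    rw [Finset.sum_congr rfl this, Finset.sum_ite_eq' (range M) j (fun _ => (1:ℂ))]
    simp [hj]
  rw [Finset.sum_congr rfl this]
  simp

lemma ae_WS_tendsto (f : ℕ → ℕ) (hf : Function.Injective f) (h : ℤ) (hh : h ≠ 0) :
    ∀ᵐ θ ∂(volume.restrict (Set.Ioc (0:ℝ) 1)),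
      Tendsto (fun N : ℕ => ‖∑ j ∈ range (N^2), ee (h * f j * θ)‖ / ((N:ℝ)^2))
        atTop (nhds 0) := by
  set μ := volume.restrict (Set.Ioc (0:ℝ) 1) with hμ
  set F : ℕ → ℝ → ℝ := fun N θ => (‖∑ j ∈ range (N^2), ee (h * f j * θ)‖ / ((N:ℝ)^2))^2
    with hF
  have hFcont : ∀ N, Continuous (F N) := by
    intro N
    apply Continuous.pow
    apply Continuous.div_const
    exact (continuous_finset_sum _ fun j _ => ee_cont' _).norm
  have hFnn : ∀ N θ, 0 ≤ F N θ := fun N θ => sq_nonneg _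
  have key : ∀ N : ℕ, (∫⁻ θ, ENNReal.ofReal (F N θ) ∂μ) ≤ ENNReal.ofReal (1/((N:ℝ)^2)) := by
    intro N
    rcases Nat.eq_zero_or_pos N with hN | hN
    · subst hN
      simp [hF]
    · have hint : Integrable (F N) μ := (hFcont N).integrableOn_Ioc
      rw [← ofReal_integral_eq_lintegral_ofReal hint (Filter.Eventually.of_forall fun θ => hFnn N θ)]
      apply ENNReal.ofReal_le_ofReal
      have h1 : F N = fun θ => ‖∑ j ∈ range (N^2), ee (h * f j * θ)‖^2 / (((N:ℝ)^2)^2) :=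
        funext fun θ => div_pow _ _ 2
      rw [h1, integral_div, WS_integral f hf h hh (N^2)]
      have hN' : ((N:ℝ)) ≠ 0 := Nat.cast_ne_zero.mpr hN.ne'
      apply le_of_eq
      push_cast
      field_simp
  have hmeas : ∀ N : ℕ, Measurable fun θ => ENNReal.ofReal (F N θ) :=
    fun N => (hFcont N).measurable.ennreal_ofReal
  have hsum : (∫⁻ θ, (∑' N : ℕ, ENNReal.ofReal (F N θ)) ∂μ) < ⊤ := by
    rw [lintegral_tsum fun N => (hmeas N).aemeasurable]
    calc (∑' N : ℕ, ∫⁻ θ, ENNReal.ofReal (F N θ) ∂μ)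
        ≤ ∑' N : ℕ, ENNReal.ofReal (1/((N:ℝ)^2)) := ENNReal.tsum_le_tsum key
      _ = ENNReal.ofReal (∑' N : ℕ, 1/((N:ℝ)^2)) := by
          rw [ENNReal.ofReal_tsum_of_nonneg (fun N => by positivity)
            (Real.summable_one_div_nat_pow.mpr one_lt_two)]
      _ < ⊤ := ENNReal.ofReal_lt_top
  have hae : ∀ᵐ θ ∂μ, (∑' N : ℕ, ENNReal.ofReal (F N θ)) < ⊤ :=
    ae_lt_top (Measurable.ennreal_tsum hmeas) hsum.ne
  filter_upwards [hae] with θ hθ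
  have hsumm : Summable fun N => F N θ := by
    have := ENNReal.summable_toReal hθ.ne
    simpa [ENNReal.toReal_ofReal (hFnn _ θ)] using this
  have hF0 : Tendsto (fun N => F N θ) atTop (nhds 0) := hsumm.tendsto_atTop_zero
  have := (Real.continuous_sqrt.tendsto 0).comp hF0
  rw [Real.sqrt_zero] at this
  convert this using 2 with N
  rw [Function.comp_apply, hF, Real.sqrt_sq (by positivity)]

lemma claim (f : ℕ → ℕ) (c ε : ℝ) (hε : 0 < ε) (θ : ℝ)
    (hgood : ∀ h : ℤ, h ≠ 0 → Tendsto (fun N : ℕ =>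
      ‖∑ j ∈ range (N^2), ee ((h:ℝ) * f j * θ)‖ / ((N:ℝ)^2)) atTop (nhds 0)) :
    ∃ j, ‖ee (f j * θ) - ee c‖ < ε := by
  by_contra hcon
  push_neg at hcon
  set K : ℕ := ⌈4/ε^2⌉₊ + 1 with hK
  have hKgt : 4/ε^2 < (K:ℝ) := by
    calc 4/ε^2 ≤ (⌈4/ε^2⌉₊ : ℝ) := Nat.le_ceil _
    _ < K := by rw [hK]; push_cast; linarith
  have hxnorm : ∀ j : ℕ, ‖ee ((f j : ℝ) * θ - c)‖ = 1 := fun j => ee_norm _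
  have hxlow : ∀ j : ℕ, ε ≤ ‖ee ((f j : ℝ) * θ - c) - 1‖ := by
    intro j
    have hsplit : ee ((f j : ℝ) * θ) - ee c = ee c * (ee ((f j : ℝ) * θ - c) - 1) := by
      rw [mul_sub, mul_one, ← ee_add]
      ring_nf
    calc ε ≤ ‖ee ((f j : ℝ) * θ) - ee c‖ := hcon j
    _ = ‖ee c‖ * ‖ee ((f j : ℝ) * θ - c) - 1‖ := by rw [hsplit, norm_mul]
    _ = ‖ee ((f j : ℝ) * θ - c) - 1‖ := by rw [ee_norm, one_mul]
  have hG : ∀ j : ℕ, ‖∑ a ∈ range K, ee ((f j : ℝ) * θ - c) ^ a‖ ≤ 2/ε := by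
    intro j
    set x := ee ((f j : ℝ) * θ - c) with hx
    have h2 : ‖(∑ a ∈ range K, x ^ a) * (x - 1)‖ ≤ 2 := by
      rw [geom_sum_mul]
      calc ‖x^K - 1‖ ≤ ‖x^K‖ + ‖(1:ℂ)‖ := norm_sub_le _ _
      _ = 2 := by rw [norm_pow, hxnorm j, one_pow, norm_one]; norm_num
    rw [norm_mul] at h2
    rw [le_div_iff₀ hε]
    calc ‖∑ a ∈ range K, x ^ a‖ * ε ≤ ‖∑ a ∈ range K, x ^ a‖ * ‖x - 1‖ :=
      mul_le_mul_of_nonneg_left (hxlow j) (norm_nonneg _)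
    _ ≤ 2 := h2
  set S : ℤ → ℕ → ℂ := fun h M => ∑ j ∈ range M, ee ((h:ℝ) * f j * θ) with hS
  set R : ℕ → ℝ := fun N => ∑ a ∈ range K, ∑ b ∈ range K,
    (if a = b then 0 else ‖S ((a:ℤ) - b) (N^2)‖ / ((N:ℝ)^2)) with hR
  have hRt : Tendsto R atTop (nhds 0) := by
    have ht : Tendsto (fun N : ℕ => ∑ a ∈ range K, ∑ b ∈ range K,
        (if a = b then 0 else ‖S ((a:ℤ) - b) (N^2)‖ / ((N:ℝ)^2))) atTop
        (nhds (∑ a ∈ range K, ∑ b ∈ range K, (0:ℝ))) := by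
      apply tendsto_finset_sum
      intro a _
      apply tendsto_finset_sum
      intro b _
      by_cases hab : a = b
      · simp only [hab, if_true]
        exact tendsto_const_nhds
      · simp only [hab, if_false, hS]
        exact hgood ((a:ℤ) - b) (sub_ne_zero.mpr (by exact_mod_cast hab))
    rw [hR]
    simpa using ht
  have hpos : 0 < (K:ℝ) - 4/ε^2 := by linarith
  obtain ⟨N, hRN, hN1⟩ : ∃ N : ℕ, R N < (K:ℝ) - 4/ε^2 ∧ 1 ≤ N := by
    exact ((hRt.eventually (gt_mem_nhds hpos)).and (eventually_ge_atTop 1)).exists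
  have hN2 : (0:ℝ) < (N:ℝ)^2 := by positivity
  set Q : ℂ := ∑ j ∈ range (N^2), (∑ a ∈ range K, ee ((f j : ℝ) * θ - c) ^ a) *
    (starRingEnd ℂ) (∑ b ∈ range K, ee ((f j : ℝ) * θ - c) ^ b) with hQ
  have hQnorm : ‖Q‖ ≤ (N:ℝ)^2 * (2/ε)^2 := by
    calc ‖Q‖ ≤ ∑ j ∈ range (N^2), ‖(∑ a ∈ range K, ee ((f j : ℝ) * θ - c) ^ a) *
        (starRingEnd ℂ) (∑ b ∈ range K, ee ((f j : ℝ) * θ - c) ^ b)‖ := norm_sum_le _ _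
    _ ≤ ∑ j ∈ range (N^2), (2/ε)^2 := by
        apply Finset.sum_le_sum
        intro j _
        rw [norm_mul, RCLike.norm_conj, sq]
        exact mul_le_mul (hG j) (hG j) (norm_nonneg _) (by positivity)
    _ = (N:ℝ)^2 * (2/ε)^2 := by
        rw [Finset.sum_const, card_range, nsmul_eq_mul]
        push_cast
        ring
  set Off : ℂ := ∑ a ∈ range K, ∑ b ∈ range K,
    (if a = b then 0 else ee (-(((a:ℤ) - b : ℤ):ℝ) * c) * S ((a:ℤ) - b) (N^2)) with hOffdef
  have hQexp : Q = ((K * N^2 : ℕ) : ℂ) + Off := by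
    have hterm : ∀ j : ℕ, (∑ a ∈ range K, ee ((f j : ℝ) * θ - c) ^ a) *
        (starRingEnd ℂ) (∑ b ∈ range K, ee ((f j : ℝ) * θ - c) ^ b)
        = ∑ a ∈ range K, ∑ b ∈ range K,
          ee (-((((a:ℤ) - b : ℤ)):ℝ) * c) * ee (((((a:ℤ) - b : ℤ)):ℝ) * f j * θ) := by
      intro j
      rw [map_sum, Finset.sum_mul_sum]
      refine sum_congr rfl fun a _ => sum_congr rfl fun b _ => ?_
      rw [← ee_nat_mul, ← ee_nat_mul, ee_conj, ← ee_add, ← ee_add]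
      congr 1
      push_cast
      ring
    have hswap : Q = ∑ a ∈ range K, ∑ b ∈ range K,
        ee (-((((a:ℤ) - b : ℤ)):ℝ) * c) * S ((a:ℤ) - b) (N^2) := by
      rw [hQ]
      simp_rw [hterm]
      rw [Finset.sum_comm]
      refine sum_congr rfl fun a _ => ?_
      rw [Finset.sum_comm]
      refine sum_congr rfl fun b _ => ?_
      rw [hS, Finset.mul_sum]
    rw [hswap]
    have hab : ∀ a ∈ range K, ∀ b ∈ range K,
        ee (-((((a:ℤ) - b : ℤ)):ℝ) * c) * S ((a:ℤ) - b) (N^2)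
        = (if a = b then ((N^2 : ℕ) : ℂ) else 0)
          + (if a = b then 0 else ee (-((((a:ℤ) - b : ℤ)):ℝ) * c) * S ((a:ℤ) - b) (N^2)) := by
      intro a _ b _
      by_cases h : a = b
      · subst h
        simp only [sub_self, if_true]
        rw [hS]
        simp [ee_zero]
      · simp [h]
    calc ∑ a ∈ range K, ∑ b ∈ range K,
        ee (-((((a:ℤ) - b : ℤ)):ℝ) * c) * S ((a:ℤ) - b) (N^2)
        = ∑ a ∈ range K, (∑ b ∈ range K, (if a = b then ((N^2 : ℕ) : ℂ) else 0)
          + ∑ b ∈ range K, (if a = b then 0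
            else ee (-((((a:ℤ) - b : ℤ)):ℝ) * c) * S ((a:ℤ) - b) (N^2))) := by
          refine sum_congr rfl fun a ha => ?_
          rw [← Finset.sum_add_distrib]
          exact sum_congr rfl fun b hb => hab a ha b hb
      _ = ((K * N^2 : ℕ) : ℂ) + Off := by
          rw [Finset.sum_add_distrib, hOffdef]
          congr 1
          have : ∀ a ∈ range K, (∑ b ∈ range K, if a = b then ((N^2 : ℕ) : ℂ) else 0)
              = ((N^2 : ℕ) : ℂ) := by
            intro a ha
            rw [Finset.sum_ite_eq]
            simp [ha]
          rw [Finset.sum_congr rfl this, Finset.sum_const, card_range]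
          push_cast
          ring
  have hOffnorm : ‖Off‖ ≤ (N:ℝ)^2 * R N := by
    rw [hOffdef, hR]
    calc ‖∑ a ∈ range K, ∑ b ∈ range K,
        (if a = b then 0 else ee (-(((a:ℤ) - b : ℤ):ℝ) * c) * S ((a:ℤ) - b) (N^2))‖
        ≤ ∑ a ∈ range K, ∑ b ∈ range K,
          ‖(if a = b then (0:ℂ) else ee (-(((a:ℤ) - b : ℤ):ℝ) * c) * S ((a:ℤ) - b) (N^2))‖ :=
          (norm_sum_le _ _).trans (Finset.sum_le_sum fun a _ => norm_sum_le _ _)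
      _ ≤ ∑ a ∈ range K, ∑ b ∈ range K,
          (N:ℝ)^2 * (if a = b then 0 else ‖S ((a:ℤ) - b) (N^2)‖ / ((N:ℝ)^2)) := by
          refine Finset.sum_le_sum fun a _ => Finset.sum_le_sum fun b _ => ?_
          by_cases h : a = b
          · simp [h]
          · simp only [h, if_false]
            rw [norm_mul, ee_norm, one_mul, mul_div_cancel₀ _ hN2.ne']
      _ = (N:ℝ)^2 * ∑ a ∈ range K, ∑ b ∈ range K,
          (if a = b then 0 else ‖S ((a:ℤ) - b) (N^2)‖ / ((N:ℝ)^2)) := by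
          rw [Finset.mul_sum]
          exact sum_congr rfl fun a _ => by rw [Finset.mul_sum]
  have hfinal : (K:ℝ) * (N:ℝ)^2 ≤ ‖Q‖ + ‖Off‖ := by
    have : ((K * N^2 : ℕ) : ℂ) = Q - Off := by rw [hQexp]; ring
    calc (K:ℝ) * (N:ℝ)^2 = ‖((K * N^2 : ℕ) : ℂ)‖ := by
          rw [Complex.norm_natCast]
          push_cast
          ring
    _ = ‖Q - Off‖ := by rw [this]
    _ ≤ ‖Q‖ + ‖Off‖ := norm_sub_le _ _
  have h4 : (2/ε)^2 = 4/ε^2 := by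
    rw [div_pow]
    norm_num
  nlinarith [hQnorm, hOffnorm, hRN, hN2, hfinal]

lemma key (f : ℕ → ℕ) (hf : Function.Injective f) (c ε : ℝ) (hε : 0 < ε) :
    ∀ᵐ θ ∂(volume : Measure ℝ), ∃ j, ‖ee ((f j : ℝ) * θ) - ee c‖ < ε := by
  set P : ℝ → Prop := fun θ => ∃ j, ‖ee ((f j : ℝ) * θ) - ee c‖ < ε with hP
  have hper : ∀ (θ : ℝ) (n : ℤ), P (θ + n) ↔ P θ := by
    intro θ n
    have hee : ∀ j : ℕ, ee ((f j : ℝ) * (θ + n)) = ee ((f j : ℝ) * θ) := by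
      intro j
      have : (f j : ℝ) * (θ + n) = (f j : ℝ) * θ + ((f j * n : ℤ) : ℝ) := by push_cast; ring
      rw [this, ee_add, ee_int, mul_one]
    constructor
    · rintro ⟨j, hj⟩; exact ⟨j, by rwa [hee j] at hj⟩
    · rintro ⟨j, hj⟩; exact ⟨j, by rwa [hee j]⟩
  have hae : ∀ᵐ θ ∂(volume.restrict (Set.Ioc (0:ℝ) 1)), ∀ h : ℤ, h ≠ 0 →
      Tendsto (fun N : ℕ => ‖∑ j ∈ range (N^2), ee ((h:ℝ) * f j * θ)‖ / ((N:ℝ)^2))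
        atTop (nhds 0) := by
    rw [ae_all_iff]
    intro h
    by_cases hh : h = 0
    · filter_upwards with θ h0
      exact absurd hh h0
    · filter_upwards [ae_WS_tendsto f hf h hh] with θ ht _
      exact ht
  have hIoc : ∀ᵐ θ ∂(volume.restrict (Set.Ioc (0:ℝ) 1)), P θ :=
    hae.mono fun θ hθ => claim f c ε hε θ hθ
  have h2 : volume ({θ | ¬ P θ} ∩ Set.Ioc 0 1) = 0 := by
    rw [← Measure.restrict_apply' measurableSet_Ioc]
    exact ae_iff.mp hIoc
  have himg : ∀ n : ℤ, volume ((fun θ : ℝ => (n:ℝ) + θ) '' ({θ | ¬ P θ} ∩ Set.Ioc 0 1)) = 0 := by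
    intro n
    have himeq : (fun θ : ℝ => (n:ℝ) + θ) '' ({θ | ¬ P θ} ∩ Set.Ioc 0 1)
        = (fun θ : ℝ => (-(n:ℝ)) + θ) ⁻¹' ({θ | ¬ P θ} ∩ Set.Ioc 0 1) := by
      ext t
      constructor
      · rintro ⟨u, hu, rfl⟩
        have huq : -(n:ℝ) + ((n:ℝ) + u) = u := by ring
        rw [Set.mem_preimage, huq]
        exact hu
      · intro h
        exact ⟨-(n:ℝ) + t, h, by ring⟩
    rw [himeq, measure_preimage_add]
    exact h2
  have hsub : {θ | ¬ P θ} ⊆ ⋃ n : ℤ, (fun θ : ℝ => (n:ℝ) + θ) '' ({θ | ¬ P θ} ∩ Set.Ioc 0 1) := by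
    intro θ hθ
    refine Set.mem_iUnion.mpr ⟨⌈θ⌉ - 1, θ - ((⌈θ⌉ : ℝ) - 1), ⟨?_, ?_⟩, by push_cast; ring⟩
    · have : P (θ - ((⌈θ⌉:ℝ) - 1) + ((⌈θ⌉ - 1 : ℤ) : ℝ)) ↔ P (θ - ((⌈θ⌉:ℝ) - 1)) :=
        hper _ _
      simp only [Set.mem_setOf_eq]
      intro hPθ
      apply hθ
      have heq : θ = θ - ((⌈θ⌉:ℝ) - 1) + ((⌈θ⌉ - 1 : ℤ) : ℝ) := by push_cast; ring
      rw [heq]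
      exact this.mpr hPθ
    · rw [Set.mem_Ioc]
      have h1 := Int.ceil_lt_add_one θ
      have h2 := Int.le_ceil θ
      constructor <;> linarith
  rw [ae_iff]
  refine le_antisymm ?_ (zero_le)
  calc volume {θ | ¬ P θ}
      ≤ volume (⋃ n : ℤ, (fun θ : ℝ => (n:ℝ) + θ) '' ({θ | ¬ P θ} ∩ Set.Ioc 0 1)) :=
        measure_mono hsub
    _ ≤ ∑' n : ℤ, volume ((fun θ : ℝ => (n:ℝ) + θ) '' ({θ | ¬ P θ} ∩ Set.Ioc 0 1)) :=
        measure_iUnion_le _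
    _ = ∑' (_ : ℤ), (0 : ENNReal) := tsum_congr himg
    _ = 0 := tsum_zero

lemma ae_dense_circle (f : ℕ → ℕ) (hf : Function.Injective f) :
    ∀ᵐ θ ∂(volume : Measure ℝ),
      Dense (Set.range fun j => Circle.exp (2 * Real.pi * (f j : ℝ) * θ)) := by
  have hae : ∀ᵐ θ ∂(volume : Measure ℝ), ∀ p : ℚ × ℕ,
      ∃ j, ‖ee ((f j : ℝ) * θ) - ee (p.1 : ℝ)‖ < 1/((p.2 : ℝ)+1) := by
    rw [ae_all_iff]
    intro p
    exact key f hf (p.1 : ℝ) (1/((p.2 : ℝ)+1)) (by positivity)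
  filter_upwards [hae] with θ hθ
  have hsub : Set.range (fun q : ℚ => Circle.exp (2 * Real.pi * (q:ℝ)))
      ⊆ closure (Set.range fun j => Circle.exp (2 * Real.pi * (f j : ℝ) * θ)) := by
    rintro _ ⟨q, rfl⟩
    rw [Metric.mem_closure_iff]
    intro δ hδ
    obtain ⟨r, hr⟩ := exists_nat_one_div_lt hδ
    obtain ⟨j, hj⟩ := hθ (q, r)
    refine ⟨_, ⟨j, rfl⟩, ?_⟩
    have hcoe : dist (Circle.exp (2 * Real.pi * (q:ℝ)))
        (Circle.exp (2 * Real.pi * (f j : ℝ) * θ)) = ‖ee ((f j : ℝ) * θ) - ee (q : ℝ)‖ := by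
      change dist ((Circle.exp (2 * Real.pi * (q:ℝ)) : ℂ)) ((Circle.exp (2 * Real.pi * (f j : ℝ) * θ) : ℂ)) = _
      rw [show (2 : ℝ) * Real.pi * (f j : ℝ) * θ = 2 * Real.pi * ((f j : ℝ) * θ) by ring]
      rw [Complex.dist_eq, ee_circle, ee_circle, norm_sub_rev]
    rw [hcoe]
    calc ‖ee ((f j : ℝ) * θ) - ee (q : ℝ)‖ < 1/((r : ℝ)+1) := hj
    _ < δ := hr
  have hQdense : Dense (Set.range (fun q : ℚ => Circle.exp (2 * Real.pi * (q:ℝ)))) := by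
    have hsurj : Function.Surjective (fun t : ℝ => Circle.exp (2 * Real.pi * t)) := by
      intro z
      refine ⟨Complex.arg z / (2 * Real.pi), ?_⟩
      show Circle.exp (2 * Real.pi * (Complex.arg z / (2 * Real.pi))) = z
      rw [mul_div_cancel₀ _ (by positivity : (2:ℝ) * Real.pi ≠ 0)]
      exact Circle.exp_arg z
    have hcont : Continuous (fun t : ℝ => Circle.exp (2 * Real.pi * t)) :=
      Circle.exp.continuous.comp (continuous_const.mul continuous_id)
    have := (hsurj.denseRange).comp Rat.denseRange_cast hcont
    exact (by simpa [Function.comp_def] using this : DenseRange (fun q : ℚ => Circle.exp (2 * Real.pi * (q:ℝ))))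
  have : closure (Set.range fun j => Circle.exp (2 * Real.pi * (f j : ℝ) * θ)) = Set.univ := by
    apply Set.eq_univ_of_univ_subset
    calc Set.univ = closure (Set.range (fun q : ℚ => Circle.exp (2 * Real.pi * (q:ℝ)))) :=
        (hQdense.closure_eq).symm
    _ ⊆ closure (closure (Set.range fun j => Circle.exp (2 * Real.pi * (f j : ℝ) * θ))) :=
        closure_mono hsub
    _ = closure (Set.range fun j => Circle.exp (2 * Real.pi * (f j : ℝ) * θ)) := closure_closure
  exact dense_iff_closure_eq.mpr this

lemma infinite_near {X : Type*} [NormedAddCommGroup X] [NormedSpace ℂ X]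
    (v : ℕ → X) (hdense : Dense (Set.range v)) (m : ℕ) (ρ : ℝ) (hρ : 0 < ρ) :
    {n | ‖v n - v m‖ < ρ}.Infinite := by
  by_cases hX : ∀ w : X, w = 0
  · have : {n | ‖v n - v m‖ < ρ} = Set.univ := by
      apply Set.eq_univ_of_forall
      intro n
      simp only [Set.mem_setOf_eq, hX (v n - v m), norm_zero]
      exact hρ
    rw [this]
    exact Set.infinite_univ
  · push_neg at hX
    obtain ⟨w, hw⟩ := hX
    have hwn : (0:ℝ) < ‖w‖ := norm_pos_iff.mpr hw
    by_contra hfin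
    rw [Set.not_infinite] at hfin
    set A : Set X := v '' {n | ‖v n - v m‖ < ρ} with hA
    have hAfin : A.Finite := hfin.image v
    have hAne : A.Nonempty := ⟨v m, m, by simp [hρ], rfl⟩
    set g : ℕ → X := fun i => v m + (ρ/(4 * ((i:ℝ)+1) * ‖w‖)) • w with hg
    have hginj : Function.Injective g := by
      intro i i' hii
      rw [hg] at hii
      simp only [add_right_inj] at hii
      have := sub_eq_zero.mpr hii
      rw [← sub_smul, smul_eq_zero] at this
      rcases this with h | h
      · have h2 : ρ/(4 * ((i:ℝ)+1) * ‖w‖) = ρ/(4 * ((i':ℝ)+1) * ‖w‖) := sub_eq_zero.mp h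
        rw [div_eq_div_iff (mul_pos (by positivity) hwn).ne' (mul_pos (by positivity) hwn).ne'] at h2
        have h3 := mul_right_cancel₀ hwn.ne' (mul_left_cancel₀ hρ.ne' h2)
        have h4 : (i:ℝ) = i' := by linarith
        exact_mod_cast h4
      · exact absurd h hw
    have hgnorm : ∀ i : ℕ, ‖g i - v m‖ < ρ/2 := by
      intro i
      rw [hg]
      simp only [add_sub_cancel_left]
      rw [norm_smul, Real.norm_eq_abs, abs_of_pos (by positivity)]
      rw [div_mul_eq_mul_div, div_lt_iff₀ (by positivity)]
      have hcast : (0:ℝ) ≤ (i:ℝ) := Nat.cast_nonneg i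
      nlinarith [mul_pos hρ hwn, mul_nonneg (mul_nonneg hρ.le hwn.le) hcast]
    obtain ⟨y, hyg, hyA⟩ := ((Set.infinite_range_of_injective hginj).diff hAfin).nonempty
    obtain ⟨i, rfl⟩ := hyg
    have hclosed : IsClosed A := hAfin.isClosed
    have hipos : 0 < Metric.infDist (g i) A :=
      (hclosed.notMem_iff_infDist_pos hAne).mp hyA
    set δ := min (Metric.infDist (g i) A) (ρ/2) with hδ
    have hδpos : 0 < δ := lt_min hipos (by positivity)
    have hδρ : δ ≤ ρ/2 := min_le_right _ _
    obtain ⟨u, hub, n, rfl⟩ := Metric.dense_iff.mp hdense (g i) (δ/2) (by positivity)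
    have hdist : dist (v n) (g i) < δ/2 := Metric.mem_ball.mp hub
    have hnmem : n ∈ {n | ‖v n - v m‖ < ρ} := by
      have htri : ‖v n - v m‖ ≤ ‖v n - g i‖ + ‖g i - v m‖ := by
        calc ‖v n - v m‖ = ‖(v n - g i) + (g i - v m)‖ := by
              congr 1
              abel
        _ ≤ ‖v n - g i‖ + ‖g i - v m‖ := norm_add_le _ _
      have h1 : ‖v n - g i‖ < δ/2 := by rwa [← dist_eq_norm]
      have h2 := hgnorm i
      simp only [Set.mem_setOf_eq]
      linarith
    have hvnA : v n ∈ A := ⟨n, hnmem, rfl⟩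
    have hle : Metric.infDist (g i) A ≤ dist (g i) (v n) :=
      Metric.infDist_le_dist_of_mem hvnA
    rw [dist_comm] at hle
    have : δ ≤ dist (v n) (g i) := le_trans (min_le_left _ _) hle
    linarith

theorem stmt_13 (X : Type*) [NormedAddCommGroup X] [NormedSpace ℂ X] [CompleteSpace X]
    (T : X →L[ℂ] X) (k : ℕ → ℕ) (hkpos : ∀ n, 0 < k n) (hkinj : Function.Injective k)
    (x : X) (b : ℝ) (hb : 1 < b)
    (hdense : Dense (Set.range fun n => (((b : ℂ) • T) ^ k n) x)) :
    ∀ᵐ θ ∂(MeasureTheory.volume : MeasureTheory.Measure ℝ),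
      Dense (Set.range fun n =>
        ((((b : ℂ) • T) ^ k n) x, Circle.exp (2 * Real.pi * k n * θ))) := by
  set v : ℕ → X := fun n => (((b : ℂ) • T) ^ k n) x with hv
  have hinf : ∀ m r : ℕ, {n | ‖v n - v m‖ < 1/((r:ℝ)+1)}.Infinite :=
    fun m r => infinite_near v hdense m _ (by positivity)
  set φ : ℕ → ℕ → ℕ → ℕ := fun m r i => ((Set.Infinite.natEmbedding _ (hinf m r)) i).1 with hφ
  have hφinj : ∀ m r, Function.Injective (fun i => k (φ m r i)) := by
    intro m r
    exact hkinj.comp (Subtype.val_injective.comp (Set.Infinite.natEmbedding _ (hinf m r)).injective)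
  have hφmem : ∀ m r i, ‖v (φ m r i) - v m‖ < 1/((r:ℝ)+1) :=
    fun m r i => ((Set.Infinite.natEmbedding _ (hinf m r)) i).2
  have hae : ∀ᵐ θ ∂(volume : Measure ℝ), ∀ p : ℕ × ℕ,
      Dense (Set.range fun i => Circle.exp (2 * Real.pi * (k (φ p.1 p.2 i) : ℝ) * θ)) := by
    rw [ae_all_iff]
    intro p
    exact ae_dense_circle _ (hφinj p.1 p.2)
  filter_upwards [hae] with θ hθ
  rw [Metric.dense_iff]
  rintro ⟨y, z⟩ δ hδ
  obtain ⟨r, hr⟩ : ∃ r : ℕ, 1/((r:ℝ)+1) < δ/2 := exists_nat_one_div_lt (by positivity)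
  obtain ⟨u, hub, m, hm⟩ := Metric.dense_iff.mp hdense y (1/((r:ℝ)+1)) (by positivity)
  obtain ⟨c, hcb, i, hi⟩ := Metric.dense_iff.mp (hθ (m, r)) z (δ/2) (by positivity)
  refine ⟨(v (φ m r i), Circle.exp (2 * Real.pi * (k (φ m r i) : ℝ) * θ)), ?_, ⟨φ m r i, rfl⟩⟩
  rw [Metric.mem_ball, Prod.dist_eq]
  rw [max_lt_iff]
  constructor
  · have h1 : dist (v m) y < 1/((r:ℝ)+1) := by
      rw [← hm] at hub
      exact Metric.mem_ball.mp hub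
    have h2 : ‖v (φ m r i) - v m‖ < 1/((r:ℝ)+1) := hφmem m r i
    calc dist (v (φ m r i)) y ≤ dist (v (φ m r i)) (v m) + dist (v m) y := dist_triangle _ _ _
    _ = ‖v (φ m r i) - v m‖ + dist (v m) y := by rw [dist_eq_norm]
    _ < 1/((r:ℝ)+1) + 1/((r:ℝ)+1) := by linarith
    _ < δ := by linarith
  · have : dist c z < δ/2 := Metric.mem_ball.mp hcb
    rw [← hi] at this
    calc dist (Circle.exp (2 * Real.pi * (k (φ m r i) : ℝ) * θ)) z < δ/2 := this
    _ < δ := by linarith
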